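/- Let x(t) = r(t)s(t) be a positive h-energy solution of the anisotropic Kepler problem defined for all t ∈ [t₀, ∞). Then there exists s⁺ ∈ S^{d-1} such that s(t) → s⁺ as t → ∞; consequently x(t)/t → √(2h) s⁺ as t → ∞. -/

import Mathlib

open Real Set Filter
open scoped RealInnerProductSpace

variable {d : ℕ}

/-- homogeneity in scalar form -/
lemma hom_smul {α : ℝ} (U : EuclideanSpace ℝ (Fin d) → ℝ)
    (hUhom : ∀ y : EuclideanSpace ℝ (Fin d), y ≠ 0 → U y = ‖y‖ ^ (-α) * U (‖y‖⁻¹ • y))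
    {y : EuclideanSpace ℝ (Fin d)} (hy : y ≠ 0) {c : ℝ} (hc : 0 < c) :
    U (c • y) = c ^ (-α) * U y := by
  have hy' : (0:ℝ) < ‖y‖ := norm_pos_iff.2 hy
  have hcy : c • y ≠ 0 := smul_ne_zero hc.ne' hy
  have hn : ‖c • y‖ = c * ‖y‖ := by
    rw [norm_smul, Real.norm_eq_abs, abs_of_pos hc]
  have hunit : ‖c • y‖⁻¹ • (c • y) = ‖y‖⁻¹ • y := by
    rw [hn, smul_smul, mul_inv, mul_assoc, mul_comm c⁻¹, mul_assoc, mul_inv_cancel₀ hc.ne',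
      mul_one]
  rw [hUhom (c • y) hcy, hunit, hn, Real.mul_rpow hc.le hy'.le, mul_assoc, ← hUhom y hy]

lemma diff_at {U : EuclideanSpace ℝ (Fin d) → ℝ}
    (hUC2 : ContDiffOn ℝ 2 U {y : EuclideanSpace ℝ (Fin d) | y ≠ 0})
    {y : EuclideanSpace ℝ (Fin d)} (hy : y ≠ 0) : DifferentiableAt ℝ U y := by
  have hopen : IsOpen {y : EuclideanSpace ℝ (Fin d) | y ≠ 0} := isOpen_ne_fun continuous_id continuous_const
  exact (hUC2.differentiableOn (by norm_num)).differentiableAt (hopen.mem_nhds hy)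

/-- Euler identity : (fderiv U y) y = -α * U y for y ≠ 0. -/
lemma euler {α : ℝ} {U : EuclideanSpace ℝ (Fin d) → ℝ}
    (hUhom : ∀ y : EuclideanSpace ℝ (Fin d), y ≠ 0 → U y = ‖y‖ ^ (-α) * U (‖y‖⁻¹ • y))
    (hUC2 : ContDiffOn ℝ 2 U {y : EuclideanSpace ℝ (Fin d) | y ≠ 0})
    {y : EuclideanSpace ℝ (Fin d)} (hy : y ≠ 0) :
    ⟪gradient U y, y⟫ = -α * U y := by
  have hdiff := diff_at hUC2 hy
  have h1 : HasDerivAt (fun c : ℝ => U (c • y)) (fderiv ℝ U y y) 1 := by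
    have hc : HasDerivAt (fun c : ℝ => c • y) y 1 := by
      simpa using (hasDerivAt_id (1:ℝ)).smul_const y
    have hd' : HasFDerivAt U (fderiv ℝ U y) ((1:ℝ) • y) := by
      rw [one_smul]; exact hdiff.hasFDerivAt
    exact hd'.comp_hasDerivAt 1 hc
  have h2 : HasDerivAt (fun c : ℝ => c ^ (-α) * U y) (-α * U y) 1 := by
    have := (Real.hasDerivAt_rpow_const (x := (1:ℝ)) (p := -α) (Or.inl one_ne_zero)).mul_const (U y)
    simpa using this
  have heq : (fun c : ℝ => U (c • y)) =ᶠ[nhds 1] (fun c : ℝ => c ^ (-α) * U y) := by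
    filter_upwards [eventually_gt_nhds (show (0:ℝ) < 1 by norm_num)] with c hc
    exact hom_smul U hUhom hy hc
  have h3 : HasDerivAt (fun c : ℝ => U (c • y)) (-α * U y) 1 := h2.congr_of_eventuallyEq heq
  have h4 : fderiv ℝ U y y = -α * U y := h1.unique h3
  rw [← h4, gradient]
  exact InnerProductSpace.toDual_symm_apply

/-- Gradient homogeneity: gradient U (c • y) = c^(-α-1) • gradient U y. -/
lemma grad_hom {α : ℝ} {U : EuclideanSpace ℝ (Fin d) → ℝ}
    (hUhom : ∀ y : EuclideanSpace ℝ (Fin d), y ≠ 0 → U y = ‖y‖ ^ (-α) * U (‖y‖⁻¹ • y))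
    (hUC2 : ContDiffOn ℝ 2 U {y : EuclideanSpace ℝ (Fin d) | y ≠ 0})
    {y : EuclideanSpace ℝ (Fin d)} (hy : y ≠ 0) {c : ℝ} (hc : 0 < c) :
    gradient U (c • y) = (c ^ (-α - 1)) • gradient U y := by
  have hcy : c • y ≠ 0 := smul_ne_zero hc.ne' hy
  have hdy := diff_at hUC2 hy
  have hdcy := diff_at hUC2 hcy
  -- fderiv of z ↦ U (c • z) at y, two ways
  have h1 : HasFDerivAt (fun z : EuclideanSpace ℝ (Fin d) => U (c • z))
      (c • fderiv ℝ U (c • y)) y := by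
    have hsm : HasFDerivAt (fun z : EuclideanSpace ℝ (Fin d) => c • z)
        (c • ContinuousLinearMap.id ℝ (EuclideanSpace ℝ (Fin d))) y :=
      (hasFDerivAt_id y).const_smul c
    have := hdcy.hasFDerivAt.comp y hsm
    have hfeq : c • fderiv ℝ U (c • y) =
        (fderiv ℝ U (c • y)).comp (c • ContinuousLinearMap.id ℝ (EuclideanSpace ℝ (Fin d))) := by
      ext v
      simp [map_smul]
    rw [hfeq]; exact this
  have h2 : HasFDerivAt (fun z : EuclideanSpace ℝ (Fin d) => U (c • z))
      (c ^ (-α) • fderiv ℝ U y) y := by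
    have hopen : IsOpen {y : EuclideanSpace ℝ (Fin d) | y ≠ 0} :=
      isOpen_ne_fun continuous_id continuous_const
    have heq : (fun z : EuclideanSpace ℝ (Fin d) => U (c • z)) =ᶠ[nhds y]
        (fun z => c ^ (-α) * U z) := by
      filter_upwards [hopen.mem_nhds hy] with z hz
      exact hom_smul U hUhom hz hc
    have : HasFDerivAt (fun z => c ^ (-α) * U z) (c ^ (-α) • fderiv ℝ U y) y :=
      hdy.hasFDerivAt.const_mul _
    exact this.congr_of_eventuallyEq heq
  have h3 : c • fderiv ℝ U (c • y) = c ^ (-α) • fderiv ℝ U y := h1.unique h2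
  have h4 : fderiv ℝ U (c • y) = (c ^ (-α - 1)) • fderiv ℝ U y := by
    have hca : c ^ (-α - 1) = c⁻¹ * c ^ (-α) := by
      rw [Real.rpow_sub hc, Real.rpow_one]; field_simp
    rw [hca, ← smul_smul]
    rw [← h3, smul_smul, inv_mul_cancel₀ hc.ne', one_smul]
  simp only [gradient, h4, map_smul]

lemma grad_cont {U : EuclideanSpace ℝ (Fin d) → ℝ}
    (hUC2 : ContDiffOn ℝ 2 U {y : EuclideanSpace ℝ (Fin d) | y ≠ 0}) :
    ContinuousOn (gradient U) {y : EuclideanSpace ℝ (Fin d) | y ≠ 0} := by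
  have hopen : IsOpen {y : EuclideanSpace ℝ (Fin d) | y ≠ 0} :=
    isOpen_ne_fun continuous_id continuous_const
  have hf : ContinuousOn (fderiv ℝ U) {y : EuclideanSpace ℝ (Fin d) | y ≠ 0} :=
    hUC2.continuousOn_fderiv_of_isOpen hopen (by norm_num)
  exact (InnerProductSpace.toDual ℝ
    (EuclideanSpace ℝ (Fin d))).symm.continuous.comp_continuousOn hf

example : True := trivial

set_option maxHeartbeats 2000000 in
theorem limiting_direction {d : ℕ} (hd : 2 ≤ d) (α h t₀ : ℝ)
    (hα : α ∈ Set.Ioo (0:ℝ) 2) (hh : 0 < h)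
    (U : EuclideanSpace ℝ (Fin d) → ℝ)
    (hUhom : ∀ y : EuclideanSpace ℝ (Fin d), y ≠ 0 →
      U y = ‖y‖ ^ (-α) * U (‖y‖⁻¹ • y))
    (hUC2 : ContDiffOn ℝ 2 U {y : EuclideanSpace ℝ (Fin d) | y ≠ 0})
    (hUpos : ∀ y : EuclideanSpace ℝ (Fin d), ‖y‖ = 1 → 0 < U y)
    (x x' : ℝ → EuclideanSpace ℝ (Fin d))
    (hx0 : ∀ t ∈ Set.Ici t₀, x t ≠ 0)
    (hx1 : ∀ t ∈ Set.Ici t₀, HasDerivAt x (x' t) t)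
    (hx2 : ∀ t ∈ Set.Ici t₀, HasDerivAt x' (gradient U (x t)) t)
    (hE : ∀ t ∈ Set.Ici t₀, (1/2) * ‖x' t‖^2 - U (x t) = h) :
    ∃ sp : EuclideanSpace ℝ (Fin d), ‖sp‖ = 1 ∧
      Tendsto (fun t => ‖x t‖⁻¹ • x t) atTop (nhds sp) ∧
      Tendsto (fun t => t⁻¹ • x t) atTop (nhds (Real.sqrt (2*h) • sp)) := by
  obtain ⟨hα0, hα2⟩ := hα
  have hnt : Nontrivial (EuclideanSpace ℝ (Fin d)) := by
    refine ⟨EuclideanSpace.single ⟨0, by omega⟩ (1:ℝ), 0, fun hcon => ?_⟩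
    have := congrArg norm hcon
    simp [EuclideanSpace.norm_single] at this
  have hsne : (Metric.sphere (0 : EuclideanSpace ℝ (Fin d)) 1).Nonempty :=
    NormedSpace.sphere_nonempty.mpr zero_le_one
  have hsub : Metric.sphere (0 : EuclideanSpace ℝ (Fin d)) 1 ⊆ {y | y ≠ 0} := by
    intro y hy
    rw [mem_sphere_zero_iff_norm] at hy
    simp only [mem_setOf_eq]
    intro hy0; rw [hy0] at hy; simp at hy
  obtain ⟨sM, hsM, hM⟩ := (isCompact_sphere (0 : EuclideanSpace ℝ (Fin d)) 1).exists_isMaxOn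
    hsne (hUC2.continuousOn.mono hsub)
  obtain ⟨sG, hsG, hG⟩ := (isCompact_sphere (0 : EuclideanSpace ℝ (Fin d)) 1).exists_isMaxOn
    hsne ((continuous_norm.comp_continuousOn (grad_cont hUC2)).mono hsub)
  set MU := U sM with hMUdef
  set CG := ‖gradient U sG‖ with hCGdef
  have hCG0 : 0 ≤ CG := norm_nonneg _
  have hMU0 : 0 < MU := hUpos sM (mem_sphere_zero_iff_norm.1 hsM)
  -- norms of unit vectors
  have hunit : ∀ y : EuclideanSpace ℝ (Fin d), y ≠ 0 → ‖(‖y‖⁻¹ • y)‖ = 1 := by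
    intro y hy
    have : (0:ℝ) < ‖y‖ := norm_pos_iff.2 hy
    rw [norm_smul, Real.norm_eq_abs, abs_of_pos (inv_pos.2 this), inv_mul_cancel₀ this.ne']
  -- bounds on U along the solution
  have hUb : ∀ y : EuclideanSpace ℝ (Fin d), y ≠ 0 →
      0 < U y ∧ U y ≤ MU * ‖y‖ ^ (-α) := by
    intro y hy
    have hny : (0:ℝ) < ‖y‖ := norm_pos_iff.2 hy
    have hmem : (‖y‖⁻¹ • y) ∈ Metric.sphere (0 : EuclideanSpace ℝ (Fin d)) 1 :=
      mem_sphere_zero_iff_norm.2 (hunit y hy)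
    have hpow : (0:ℝ) < ‖y‖ ^ (-α) := Real.rpow_pos_of_pos hny _
    constructor
    · rw [hUhom y hy]
      exact mul_pos hpow (hUpos _ (hunit y hy))
    · rw [hUhom y hy, mul_comm MU _]
      exact mul_le_mul_of_nonneg_left (hM hmem) hpow.le
  -- gradient bound
  have hgrad_le : ∀ y : EuclideanSpace ℝ (Fin d), y ≠ 0 →
      ‖gradient U y‖ ≤ CG * ‖y‖ ^ (-α - 1) := by
    intro y hy
    have hny : (0:ℝ) < ‖y‖ := norm_pos_iff.2 hy
    have hmem : (‖y‖⁻¹ • y) ∈ Metric.sphere (0 : EuclideanSpace ℝ (Fin d)) 1 :=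
      mem_sphere_zero_iff_norm.2 (hunit y hy)
    have hyy : y = ‖y‖ • (‖y‖⁻¹ • y) := by
      rw [smul_smul, mul_inv_cancel₀ hny.ne', one_smul]
    have hgeq : gradient U y = (‖y‖ ^ (-α - 1)) • gradient U (‖y‖⁻¹ • y) := by
      conv_lhs => rw [hyy]
      exact grad_hom hUhom hUC2 (hsub hmem) hny
    rw [hgeq, norm_smul, Real.norm_eq_abs,
      abs_of_pos (Real.rpow_pos_of_pos hny _), mul_comm]
    exact mul_le_mul_of_nonneg_right (hG hmem) (Real.rpow_pos_of_pos hny _).le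
  -- the radial momentum p
  set p : ℝ → ℝ := fun t => ⟪x t, x' t⟫ with hpdef
  have hp' : ∀ t ∈ Ici t₀, HasDerivAt p (2*h + (2-α) * U (x t)) t := by
    intro t ht
    have hder := HasDerivAt.inner ℝ (hx1 t ht) (hx2 t ht)
    have heq : ⟪x t, gradient U (x t)⟫ + ⟪x' t, x' t⟫ = 2*h + (2-α) * U (x t) := by
      rw [real_inner_comm (gradient U (x t)) (x t), euler hUhom hUC2 (hx0 t ht), real_inner_self_eq_norm_sq]
      have := hE t ht
      nlinarith [this]
    rw [heq] at hder
    exact hder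
  -- p grows at least linearly
  have hqmono : MonotoneOn (fun t => p t - 2*h*t) (Ici t₀) := by
    apply monotoneOn_of_hasDerivWithinAt_nonneg (convex_Ici t₀)
      (f' := fun t => (2-α) * U (x t))
    · intro t ht
      have hder : HasDerivAt (fun t => p t - 2*h*t) ((2-α) * U (x t)) t := by
        have := (hp' t ht).sub ((hasDerivAt_id t).const_mul (2*h))
        have e : (2-α) * U (x t) = 2*h + (2-α) * U (x t) - 2*h*1 := by ring
        rw [e]; exact this
      exact hder.continuousAt.continuousWithinAt
    · intro t ht
      rw [interior_Ici] at ht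
      have hder : HasDerivAt (fun t => p t - 2*h*t) ((2-α) * U (x t)) t := by
        have := (hp' t (mem_Ici.2 ht.le)).sub ((hasDerivAt_id t).const_mul (2*h))
        have e : (2-α) * U (x t) = 2*h + (2-α) * U (x t) - 2*h*1 := by ring
        rw [e]; exact this
      exact hder.hasDerivWithinAt
    · intro t ht
      rw [interior_Ici] at ht
      have hU := (hUb (x t) (hx0 t (mem_Ici.2 ht.le))).1
      nlinarith
  set A := t₀ - p t₀ / (2*h) with hAdef
  set T₁ := max t₀ A with hT₁def
  have hT₁ : t₀ ≤ T₁ := le_max_left _ _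
  have hp_lb : ∀ t, T₁ ≤ t → 2*h*(t - T₁) ≤ p t := by
    intro t ht
    have ht₀ : t₀ ≤ t := hT₁.trans ht
    have hq := hqmono self_mem_Ici (mem_Ici.2 ht₀) ht₀
    have hA : A ≤ T₁ := le_max_right _ _
    have h2hA : 2*h*A = 2*h*t₀ - p t₀ := by
      rw [hAdef]
      field_simp
    simp only [] at hq
    nlinarith
  -- quadratic growth of ‖x t‖²
  have hN' : ∀ t ∈ Ici t₀, HasDerivAt (fun τ => ‖x τ‖^2) (2 * p t) t := by
    intro t ht
    have hder := HasDerivAt.inner ℝ (hx1 t ht) (hx1 t ht)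
    have heq : (fun τ => (⟪x τ, x τ⟫:ℝ)) = fun τ => ‖x τ‖^2 := by
      funext τ
      rw [real_inner_self_eq_norm_sq]
    rw [heq] at hder
    have hval : (⟪x t, x' t⟫:ℝ) + ⟪x' t, x t⟫ = 2 * p t := by
      have hcomm := real_inner_comm (x' t) (x t)
      simp only [hpdef]
      linarith [hcomm]
    rwa [hval] at hder
  have hJmono : MonotoneOn (fun t => ‖x t‖^2 - h*(t - T₁)^2) (Ici T₁) := by
    apply monotoneOn_of_hasDerivWithinAt_nonneg (convex_Ici T₁)
      (f' := fun t => 2 * p t - h * (2*(t - T₁)))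
    · intro t ht
      have hder : HasDerivAt (fun t => ‖x t‖^2 - h*(t - T₁)^2)
          (2 * p t - h * (2*(t - T₁))) t := by
        have hq : HasDerivAt (fun t : ℝ => (t - T₁)^2) (2*(t - T₁)) t := by
          simpa using ((hasDerivAt_id t).sub_const T₁).fun_pow 2
        exact (hN' t (mem_Ici.2 (hT₁.trans ht))).sub (hq.const_mul h)
      exact hder.continuousAt.continuousWithinAt
    · intro t ht
      rw [interior_Ici] at ht
      have hder : HasDerivAt (fun t => ‖x t‖^2 - h*(t - T₁)^2)
          (2 * p t - h * (2*(t - T₁))) t := by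
        have hq : HasDerivAt (fun t : ℝ => (t - T₁)^2) (2*(t - T₁)) t := by
          simpa using ((hasDerivAt_id t).sub_const T₁).fun_pow 2
        exact (hN' t (mem_Ici.2 (hT₁.trans ht.le))).sub (hq.const_mul h)
      exact hder.hasDerivWithinAt
    · intro t ht
      rw [interior_Ici] at ht
      have := hp_lb t ht.le
      nlinarith [hh, (mem_Ioi.1 ht).le]
  have hr_lb : ∀ t, T₁ ≤ t → Real.sqrt h * (t - T₁) ≤ ‖x t‖ := by
    intro t ht
    have hJ := hJmono self_mem_Ici (mem_Ici.2 ht) ht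
    simp only [] at hJ
    have h1 : h*(t-T₁)^2 ≤ ‖x t‖^2 := by nlinarith [sq_nonneg ‖x T₁‖]
    have h2 : Real.sqrt (h*(t-T₁)^2) ≤ Real.sqrt (‖x t‖^2) := Real.sqrt_le_sqrt h1
    rwa [Real.sqrt_mul hh.le, Real.sqrt_sq (by linarith : (0:ℝ) ≤ t - T₁),
      Real.sqrt_sq (norm_nonneg _)] at h2
  -- linear lower bound
  set c₀ := Real.sqrt h / 2 with hc₀def
  have hc₀ : 0 < c₀ := by
    rw [hc₀def]
    have := Real.sqrt_pos.2 hh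
    linarith
  set T₂ := max (max (2*T₁) t₀) 1 with hT₂def
  have hT₂1 : (1:ℝ) ≤ T₂ := le_max_right _ _
  have hT₂t₀ : t₀ ≤ T₂ := le_trans (le_max_right _ _) (le_max_left _ _)
  have hT₂T₁ : T₁ ≤ T₂ := by
    rcases le_total T₁ 1 with hle | hle
    · exact hle.trans hT₂1
    · have h0 : (0:ℝ) ≤ T₁ := by linarith
      have : T₁ ≤ 2*T₁ := by linarith
      exact this.trans (le_trans (le_max_left _ _) (le_max_left _ _))
  have hr2 : ∀ t, T₂ ≤ t → c₀ * t ≤ ‖x t‖ := by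
    intro t ht
    have h2T₁ : 2*T₁ ≤ t := le_trans (le_trans (le_max_left _ _) (le_max_left _ _)) ht
    have hT₁t : T₁ ≤ t := hT₂T₁.trans ht
    have hlb := hr_lb t hT₁t
    have hs0 : (0:ℝ) ≤ Real.sqrt h := Real.sqrt_nonneg h
    have hkey : (0:ℝ) ≤ Real.sqrt h * (t/2 - T₁) :=
      mul_nonneg hs0 (by linarith)
    rw [hc₀def]
    nlinarith
  -- decay of the gradient along the solution
  set K := CG * c₀ ^ (-α - 1) with hKdef
  have hK0 : 0 ≤ K := mul_nonneg hCG0 (Real.rpow_nonneg hc₀.le _)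
  have hgx : ∀ t, T₂ ≤ t → ‖gradient U (x t)‖ ≤ K * t ^ (-α - 1) := by
    intro t ht
    have ht0 : (0:ℝ) < t := lt_of_lt_of_le (by linarith) ht
    have hxt0 : x t ≠ 0 := hx0 t (mem_Ici.2 (hT₂t₀.trans ht))
    have h1 := hgrad_le (x t) hxt0
    have h2 : ‖x t‖ ^ (-α-1) ≤ (c₀ * t) ^ (-α-1) :=
      Real.rpow_le_rpow_of_nonpos (by positivity) (hr2 t ht) (by linarith)
    have h3 : (c₀*t) ^ (-α-1) = c₀^(-α-1) * t^(-α-1) := Real.mul_rpow hc₀.le ht0.le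
    calc ‖gradient U (x t)‖ ≤ CG * ‖x t‖^(-α-1) := h1
    _ ≤ CG * (c₀*t)^(-α-1) := mul_le_mul_of_nonneg_left h2 hCG0
    _ = K * t^(-α-1) := by rw [h3, hKdef]; ring
  -- Cauchy estimate for the velocity
  have hCB : ∀ a b : ℝ, T₂ ≤ a → a ≤ b → ‖x' b - x' a‖ ≤ K / α * a ^ (-α) := by
    intro a b ha hab
    have ha0 : (0:ℝ) < a := lt_of_lt_of_le (by linarith) ha
    have hat₀ : t₀ ≤ a := hT₂t₀.trans ha
    have hxc : ContinuousOn x (Icc a b) := fun τ hτ =>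
      ((hx1 τ (mem_Ici.2 (hat₀.trans hτ.1))).continuousAt).continuousWithinAt
    have hic : ContinuousOn (fun τ => gradient U (x τ)) (Icc a b) :=
      (grad_cont hUC2).comp hxc (fun τ hτ => hx0 τ (mem_Ici.2 (hat₀.trans hτ.1)))
    have hii : IntervalIntegrable (fun τ => gradient U (x τ)) MeasureTheory.volume a b := by
      apply ContinuousOn.intervalIntegrable
      rwa [uIcc_of_le hab]
    have hftc : ∫ τ in a..b, gradient U (x τ) = x' b - x' a := by
      apply intervalIntegral.integral_eq_sub_of_hasDerivAt _ hii
      intro τ hτ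
      rw [uIcc_of_le hab] at hτ
      exact hx2 τ (mem_Ici.2 (hat₀.trans hτ.1))
    have hbc : ContinuousOn (fun τ : ℝ => K * τ^(-α-1)) (Icc a b) := by
      apply continuousOn_const.mul
      apply ContinuousOn.rpow_const continuousOn_id
      intro τ hτ
      have hτ0 : (0:ℝ) < τ := lt_of_lt_of_le ha0 hτ.1
      exact Or.inl (ne_of_gt hτ0)
    have hbii : IntervalIntegrable (fun τ : ℝ => K * τ^(-α-1)) MeasureTheory.volume a b := by
      apply ContinuousOn.intervalIntegrable
      rwa [uIcc_of_le hab]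
    have hnorm : ‖x' b - x' a‖ ≤ |∫ τ in a..b, K * τ^(-α-1)| := by
      rw [← hftc]
      apply intervalIntegral.norm_integral_le_abs_of_norm_le _ hbii
      apply MeasureTheory.ae_restrict_of_forall_mem measurableSet_uIoc
      intro τ hτ
      rw [uIoc_of_le hab] at hτ
      exact hgx τ (ha.trans hτ.1.le)
    have hval : ∫ τ in a..b, K * τ^(-α-1) = K * ((b ^ (-α) - a ^ (-α)) / (-α)) := by
      rw [intervalIntegral.integral_const_mul]
      congr 1
      have h0 : (0:ℝ) ∉ Set.uIcc a b := by
        rw [Set.uIcc_of_le hab]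
        intro hmem
        exact absurd hmem.1 (by linarith)
      rw [integral_rpow (Or.inr ⟨by intro hcon; apply hα0.ne'; linarith [hcon], h0⟩)]
      norm_num
    have hfin : K * ((b ^ (-α) - a ^ (-α)) / (-α)) ≤ K / α * a ^ (-α) := by
      have hb0 : (0:ℝ) ≤ b ^ (-α) := Real.rpow_nonneg (by linarith) _
      have hKα : 0 ≤ K / α := div_nonneg hK0 hα0.le
      have heq : K * ((b ^ (-α) - a ^ (-α)) / (-α)) = K/α * (a ^ (-α) - b ^ (-α)) := by
        rw [div_neg]
        ring
      rw [heq]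
      have : a ^ (-α) - b ^ (-α) ≤ a ^ (-α) := by linarith
      exact mul_le_mul_of_nonneg_left this hKα
    calc ‖x' b - x' a‖ ≤ |∫ τ in a..b, K * τ^(-α-1)| := hnorm
    _ = |K * ((b ^ (-α) - a ^ (-α)) / (-α))| := by rw [hval]
    _ = K * ((b ^ (-α) - a ^ (-α)) / (-α)) := by
        rw [abs_of_nonneg]
        rw [← hval]
        apply intervalIntegral.integral_nonneg hab
        intro τ hτ
        have : (0:ℝ) < τ := by linarith [hτ.1]
        positivity
    _ ≤ K / α * a ^ (-α) := hfin
  -- the velocity converges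
  have hcauchy : CauchySeq x' := by
    rw [Metric.cauchySeq_iff']
    intro ε hε
    have htend : Tendsto (fun t : ℝ => K/α * t^(-α)) atTop (nhds 0) := by
      have := (tendsto_rpow_neg_atTop hα0).const_mul (K/α)
      simpa using this
    have hev : ∀ᶠ t in atTop, K/α * t^(-α) < ε := htend.eventually (gt_mem_nhds hε)
    obtain ⟨N, hN1, hN2⟩ := (hev.and (eventually_ge_atTop T₂)).exists
    exact ⟨N, fun n hn => by
      rw [dist_eq_norm]
      exact lt_of_le_of_lt (hCB N n hN2 hn) hN1⟩
  obtain ⟨v, hv⟩ := cauchySeq_tendsto_of_complete hcauchy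
  -- the norm of v
  have hU0 : Tendsto (fun t => U (x t)) atTop (nhds 0) := by
    have hdecay : Tendsto (fun t : ℝ => (MU * c₀^(-α)) * t^(-α)) atTop (nhds 0) := by
      have := (tendsto_rpow_neg_atTop hα0).const_mul (MU * c₀^(-α))
      simpa using this
    apply squeeze_zero' ?_ ?_ hdecay
    · filter_upwards [eventually_ge_atTop t₀] with t ht
      exact (hUb (x t) (hx0 t ht)).1.le
    · filter_upwards [eventually_ge_atTop T₂] with t ht
      have ht0 : (0:ℝ) < t := by linarith
      have h1 := (hUb (x t) (hx0 t (mem_Ici.2 (hT₂t₀.trans ht)))).2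
      have h2 : ‖x t‖ ^ (-α) ≤ (c₀ * t) ^ (-α) :=
        Real.rpow_le_rpow_of_nonpos (by positivity) (hr2 t ht) (by linarith)
      have h3 : (c₀*t) ^ (-α) = c₀^(-α) * t^(-α) := Real.mul_rpow hc₀.le ht0.le
      calc U (x t) ≤ MU * ‖x t‖ ^ (-α) := h1
      _ ≤ MU * (c₀*t)^(-α) := mul_le_mul_of_nonneg_left h2 hMU0.le
      _ = (MU * c₀^(-α)) * t^(-α) := by rw [h3]; ring
  have hxv2 : Tendsto (fun t => ‖x' t‖^2) atTop (nhds (2*h)) := by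
    have heq : (fun t => ‖x' t‖^2) =ᶠ[atTop] fun t => 2*h + 2*U (x t) := by
      filter_upwards [eventually_ge_atTop t₀] with t ht
      have := hE t ht
      linarith
    rw [tendsto_congr' heq]
    have := (hU0.const_mul 2).const_add (2*h)
    simpa using this
  have hnv2 : Tendsto (fun t => ‖x' t‖^2) atTop (nhds (‖v‖^2)) := (hv.norm).pow 2
  have hveq : ‖v‖^2 = 2*h := tendsto_nhds_unique hnv2 hxv2
  have hsq : 0 < Real.sqrt (2*h) := Real.sqrt_pos.2 (by linarith)
  have hvnorm : ‖v‖ = Real.sqrt (2*h) := by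
    rw [← hveq, Real.sqrt_sq (norm_nonneg v)]
  have hv0 : v ≠ 0 := by
    intro hcon
    rw [hcon, norm_zero] at hvnorm
    linarith
  -- position limit : x t / t → v
  have hxvlim : Tendsto (fun t => t⁻¹ • x t) atTop (nhds v) := by
    rw [Metric.tendsto_atTop]
    intro ε hε
    obtain ⟨T₃', hT₃'⟩ := Metric.tendsto_atTop.1 hv (ε/4) (by linarith)
    set T₃ := max T₃' T₂ with hT₃def
    have hT₃T₂ : T₂ ≤ T₃ := le_max_right _ _
    have hT₃1 : (1:ℝ) ≤ T₃ := hT₂1.trans hT₃T₂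
    have hT₃t₀ : t₀ ≤ T₃ := hT₂t₀.trans hT₃T₂
    have hvel : ∀ τ, T₃ ≤ τ → ‖x' τ - v‖ ≤ ε/4 := by
      intro τ hτ
      have := hT₃' τ (le_trans (le_max_left _ _) hτ)
      rw [dist_eq_norm] at this
      exact this.le
    have hMVT : ∀ t, T₃ ≤ t → ‖(x t - t • v) - (x T₃ - T₃ • v)‖ ≤ ε/4 * ‖t - T₃‖ := by
      intro t ht
      have hder : ∀ τ ∈ Icc T₃ t, HasDerivWithinAt (fun τ => x τ - τ • v)
          (x' τ - v) (Icc T₃ t) τ := by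
        intro τ hτ
        have h1 : HasDerivAt (fun τ : ℝ => τ • v) v τ := by
          simpa using (hasDerivAt_id τ).smul_const v
        exact (((hx1 τ (mem_Ici.2 (hT₃t₀.trans hτ.1))).sub h1)).hasDerivWithinAt
      have hbd : ∀ τ ∈ Icc T₃ t, ‖x' τ - v‖ ≤ ε/4 := fun τ hτ => hvel τ hτ.1
      exact Convex.norm_image_sub_le_of_norm_hasDerivWithin_le hder hbd (convex_Icc T₃ t)
        (left_mem_Icc.2 ht) (right_mem_Icc.2 ht)
    set B := ‖x T₃ - T₃ • v‖ with hBdef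
    have hB0 : (0:ℝ) ≤ B := norm_nonneg _
    refine ⟨max T₃ (4*B/ε + 1), fun t ht => ?_⟩
    have htT₃ : T₃ ≤ t := le_trans (le_max_left _ _) ht
    have htB : 4*B/ε + 1 ≤ t := le_trans (le_max_right _ _) ht
    have ht0 : (0:ℝ) < t := lt_of_lt_of_le (by linarith) htT₃
    have hεt : 4*B + ε ≤ ε * t := by
      have h1 : ε * (4*B/ε + 1) = 4*B + ε := by field_simp
      calc 4*B + ε = ε * (4*B/ε + 1) := h1.symm
      _ ≤ ε * t := mul_le_mul_of_nonneg_left htB hε.le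
    have h1 : ‖x t - t • v‖ ≤ B + ε/4 * (t - T₃) := by
      have htri : ‖x t - t • v‖ ≤ B + ‖(x t - t • v) - (x T₃ - T₃ • v)‖ := by
        have := norm_sub_le_norm_sub_add_norm_sub (x t - t • v) (x T₃ - T₃ • v) 0
        simp only [sub_zero] at this
        calc ‖x t - t • v‖ ≤ ‖(x t - t • v) - (x T₃ - T₃ • v)‖ + ‖x T₃ - T₃ • v‖ := this
        _ = B + ‖(x t - t • v) - (x T₃ - T₃ • v)‖ := by rw [hBdef]; ring
      have hm := hMVT t htT₃
      rw [Real.norm_eq_abs, abs_of_nonneg (by linarith : (0:ℝ) ≤ t - T₃)] at hm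
      linarith
    rw [dist_eq_norm]
    have hsplit : t⁻¹ • x t - v = t⁻¹ • (x t - t • v) := by
      rw [smul_sub, inv_smul_smul₀ ht0.ne']
    rw [hsplit, norm_smul, Real.norm_eq_abs, abs_of_pos (inv_pos.2 ht0)]
    have h2 : t⁻¹ * ‖x t - t • v‖ ≤ t⁻¹ * (B + ε/4 * (t - T₃)) :=
      mul_le_mul_of_nonneg_left h1 (inv_pos.2 ht0).le
    have h3 : t⁻¹ * (B + ε/4 * (t - T₃)) < ε := by
      rw [inv_mul_eq_div, div_lt_iff₀ ht0]
      have hT₃0 : (0:ℝ) < T₃ := lt_of_lt_of_le one_pos hT₃1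
      nlinarith
    linarith
  -- conclusion
  refine ⟨(Real.sqrt (2*h))⁻¹ • v, ?_, ?_, ?_⟩
  · rw [norm_smul, Real.norm_eq_abs, abs_of_pos (inv_pos.2 hsq), hvnorm,
      inv_mul_cancel₀ hsq.ne']
  · have hcont : ContinuousAt (fun y : EuclideanSpace ℝ (Fin d) => ‖y‖⁻¹ • y) v :=
      (continuousAt_id.norm.inv₀ (norm_ne_zero_iff.2 hv0)).smul continuousAt_id
    have hcomp : Tendsto (fun t => ‖t⁻¹ • x t‖⁻¹ • (t⁻¹ • x t)) atTop (nhds (‖v‖⁻¹ • v)) :=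
      hcont.tendsto.comp hxvlim
    have hψv : ‖v‖⁻¹ • v = (Real.sqrt (2*h))⁻¹ • v := by rw [hvnorm]
    rw [hψv] at hcomp
    apply Tendsto.congr' _ hcomp
    filter_upwards [eventually_ge_atTop (max T₂ 1)] with t ht
    have ht0 : (0:ℝ) < t := lt_of_lt_of_le one_pos (le_trans (le_max_right _ _) ht)
    have hxt0 : x t ≠ 0 := hx0 t (mem_Ici.2 (hT₂t₀.trans (le_trans (le_max_left _ _) ht)))
    have hxn0 : (0:ℝ) < ‖x t‖ := norm_pos_iff.2 hxt0
    show ‖t⁻¹ • x t‖⁻¹ • (t⁻¹ • x t) = ‖x t‖⁻¹ • x t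
    rw [norm_smul, Real.norm_eq_abs, abs_of_pos (inv_pos.2 ht0), mul_inv, inv_inv,
      smul_smul]
    congr 1
    field_simp
  · have hfix : Real.sqrt (2*h) • (Real.sqrt (2*h))⁻¹ • v = v := smul_inv_smul₀ hsq.ne' v
    rw [hfix]
    exact hxvlim
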